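/- arXiv:1003.5783 — 2 statements merged into one kernel-verified Lean document; each statement's English description precedes it below -/
import Mathlib

section
/- For each positive integer k, there exists a finite loopless multigraph G_k with r_v(G_k) − r'_v(G_k) = k. -/
/-- A finite multigraph: finite vertex and edge types together with an incidence map
assigning to each edge an unordered pair of vertices. -/
structure Mgraph where
  V : Type
  E : Type
  [finV : Finite V]
  [finE : Finite E]
  inc : E → Sym2 V

attribute [instance] Mgraph.finV Mgraph.finE

namespace Mgraph

/-- A multigraph is loopless if no edge joins a vertex to itself. -/
def Loopless (G : Mgraph) : Prop := ∀ e : G.E, ¬ (G.inc e).IsDiag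

/-- The degree of a vertex: the number of edges incident with it. -/
noncomputable def degree (G : Mgraph) (v : G.V) : ℕ :=
  Nat.card {e : G.E // v ∈ G.inc e}

/-- The maximum degree Δ(G). -/
noncomputable def maxDegree (G : Mgraph) : ℕ :=
  sSup (Set.range G.degree)

/-- `G` is `s`-regular. -/
def Regular (G : Mgraph) (s : ℕ) : Prop := ∀ v : G.V, G.degree v = s

/-- A proper edge coloring with `k` colors: adjacent (distinct, sharing an endpoint)
edges receive different colors. -/
def IsProperEdgeColoring (G : Mgraph) {k : ℕ} (c : G.E → Fin k) : Prop :=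
  ∀ e f : G.E, e ≠ f → (∃ v : G.V, v ∈ G.inc e ∧ v ∈ G.inc f) → c e ≠ c f

/-- `G` admits a proper edge coloring with `k` colors. -/
def EdgeColorable (G : Mgraph) (k : ℕ) : Prop :=
  ∃ c : G.E → Fin k, G.IsProperEdgeColoring c

/-- The chromatic index χ'(G). -/
noncomputable def chromaticIndex (G : Mgraph) : ℕ :=
  sInf {k : ℕ | G.EdgeColorable k}

/-- `G` is class 1, i.e. χ'(G) = Δ(G). -/
noncomputable def ClassOne (G : Mgraph) : Prop := G.chromaticIndex = G.maxDegree

/-- Delete a set of edges from `G`. -/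
def deleteEdges (G : Mgraph) (S : Set G.E) : Mgraph where
  V := G.V
  E := {e : G.E // e ∉ S}
  inc e := G.inc e.1

/-- Delete a set of vertices from `G`, together with all incident edges. -/
def deleteVerts (G : Mgraph) (S : Set G.V) : Mgraph where
  V := {v : G.V // v ∉ S}
  E := {e : G.E // ∀ v : G.V, v ∈ G.inc e → v ∉ S}
  inc e := (G.inc e.1).pmap (fun v hv => ⟨v, hv⟩) e.2

/-- The simple graph on `V(G)` whose adjacency is realized by the edges in `F`. -/
def factorGraph (G : Mgraph) (F : Set G.E) : SimpleGraph G.V where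
  Adj u w := u ≠ w ∧ ∃ e ∈ F, G.inc e = s(u, w)
  symm := by
    constructor
    rintro u w ⟨hne, e, heF, he⟩
    exact ⟨hne.symm, e, heF, by rw [he]; exact Sym2.eq_swap⟩
  loopless := by constructor; rintro v ⟨hne, -⟩; exact hne rfl

/-- `G` is connected (in particular nonempty). -/
def Connected (G : Mgraph) : Prop := (G.factorGraph Set.univ).Connected

/-- `G` is 2-connected: it has at least 3 vertices and deleting any single vertex
leaves a connected graph. -/
def TwoConnected (G : Mgraph) : Prop :=
  3 ≤ Nat.card G.V ∧ ∀ v : G.V, (G.deleteVerts {v}).Connected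

/-- The number of odd cycles in the spanning subgraph of `G` with edge set `F`:
the number of connected components of odd cardinality. -/
noncomputable def oddCycles (G : Mgraph) (F : Set G.E) : ℕ :=
  Nat.card {C : (G.factorGraph F).ConnectedComponent //
    Odd (Nat.card {v : G.V // (G.factorGraph F).connectedComponentMk v = C})}

/-- `F` is a 1-factor (perfect matching): every vertex meets exactly one edge of `F`. -/
def IsOneFactor (G : Mgraph) (F : Set G.E) : Prop :=
  ∀ v : G.V, Nat.card {e : G.E // e ∈ F ∧ v ∈ G.inc e} = 1

/-- `F` is a 2-factor (spanning 2-regular subgraph): every vertex meets exactly two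
edges of `F`. -/
def IsTwoFactor (G : Mgraph) (F : Set G.E) : Prop :=
  ∀ v : G.V, Nat.card {e : G.E // e ∈ F ∧ v ∈ G.inc e} = 2

/-- `f` encodes a decomposition of the edge set of `G` into `n` 2-factors
(the fibers of `some i`), together with, possibly, one 1-factor (the fiber of `none`,
which is required to be empty when no 1-factor is used). -/
def IsDecomp (G : Mgraph) {n : ℕ} (f : G.E → Option (Fin n)) : Prop :=
  ((∀ e : G.E, f e ≠ none) ∨ G.IsOneFactor {e | f e = none}) ∧
    ∀ i : Fin n, G.IsTwoFactor {e | f e = some i}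

/-- The total number of odd cycles of the 2-factors of a decomposition. -/
noncomputable def decompOdd (G : Mgraph) {n : ℕ} (f : G.E → Option (Fin n)) : ℕ :=
  ∑ i : Fin n, G.oddCycles {e | f e = some i}

/-- The oddness ξ(G): the minimum total number of odd cycles over all decompositions of
the edge set into 2-factors (together with one 1-factor when the degree is odd);
`⊤` if no such decomposition exists. -/
noncomputable def oddness (G : Mgraph) : ℕ∞ :=
  sInf {k : ℕ∞ | ∃ (n : ℕ) (f : G.E → Option (Fin n)),
    G.IsDecomp f ∧ k = (G.decompOdd f : ℕ∞)}

/-- The minimum number of edges whose removal from `G` leaves a graph that is properly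
edge colorable with `D` colors. -/
noncomputable def resistanceTo (G : Mgraph) (D : ℕ) : ℕ :=
  sInf {k : ℕ | ∃ S : Set G.E, Nat.card S = k ∧ (G.deleteEdges S).EdgeColorable D}

/-- The resistance r(G): the minimum number of edges whose removal from `G` leaves a
Δ(G)-edge-colorable graph. -/
noncomputable def resistance (G : Mgraph) : ℕ := G.resistanceTo G.maxDegree

/-- The vertex resistance r_v(G): the minimum number of vertices whose removal from `G`
leaves a class 1 graph. -/
noncomputable def rv (G : Mgraph) : ℕ :=
  sInf {k : ℕ | ∃ S : Set G.V, Nat.card S = k ∧ (G.deleteVerts S).ClassOne}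

/-- The vertex resistance r'_v(G): the minimum number of vertices whose removal from `G`
leaves a graph `H` with χ'(H) ≤ Δ(G). -/
noncomputable def rv' (G : Mgraph) : ℕ :=
  sInf {k : ℕ | ∃ S : Set G.V, Nat.card S = k ∧
    (G.deleteVerts S).chromaticIndex ≤ G.maxDegree}

/-- The edge boundary ∂_G(X): the set of edges with one endpoint in `X` and one
endpoint outside `X`. -/
def edgeBoundary (G : Mgraph) (X : Set G.V) : Set G.E :=
  {e : G.E | ∃ u ∈ G.inc e, ∃ w ∈ G.inc e, u ∈ X ∧ w ∉ X}

/-- `G` is an `s`-graph: a loopless `s`-regular multigraph with `|∂_G(X)| ≥ s` for every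
odd set `X` of vertices. -/
def IsSGraph (G : Mgraph) (s : ℕ) : Prop :=
  G.Loopless ∧ G.Regular s ∧
    ∀ X : Set G.V, Odd (Nat.card X) → s ≤ Nat.card (G.edgeBoundary X)

end Mgraph

namespace Wk
open Mgraph

variable {G : Mgraph}

lemma edgeColorable_exists (G : Mgraph) : ∃ n, G.EdgeColorable n := by
  obtain ⟨n, ⟨e⟩⟩ := Finite.exists_equiv_fin G.E
  exact ⟨n, e, fun a b hab _ h => hab (e.injective h)⟩

lemma chromaticIndex_le {n : ℕ} (h : G.EdgeColorable n) : G.chromaticIndex ≤ n :=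
  Nat.sInf_le h

lemma le_chromaticIndex {ι : Type} [Fintype ι] (f : ι → G.E)
    (hinj : Function.Injective f)
    (hadj : ∀ a b : ι, ∃ v, v ∈ G.inc (f a) ∧ v ∈ G.inc (f b)) :
    Fintype.card ι ≤ G.chromaticIndex := by
  have hne : {n : ℕ | G.EdgeColorable n}.Nonempty := edgeColorable_exists G
  obtain ⟨c, hc⟩ := Nat.sInf_mem hne
  have hi : Function.Injective (c ∘ f) := by
    intro a b h
    by_contra hab
    exact hc (f a) (f b) (fun hf => hab (hinj hf)) (hadj a b) h
  have := Fintype.card_le_of_injective _ hi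
  simp only [Fintype.card_fin] at this
  exact this

lemma maxDegree_le {n : ℕ} (h : ∀ v, G.degree v ≤ n) : G.maxDegree ≤ n :=
  csSup_le' (by rintro _ ⟨v, rfl⟩; exact h v)

lemma le_maxDegree (v : G.V) : G.degree v ≤ G.maxDegree :=
  le_csSup ((Set.finite_range _).bddAbove) ⟨v, rfl⟩

lemma mem_inc_deleteVerts {S : Set G.V} (e : (G.deleteVerts S).E) (v : G.V) (hv : v ∉ S) :
    (⟨v, hv⟩ : (G.deleteVerts S).V) ∈ (G.deleteVerts S).inc e ↔ v ∈ G.inc e.1 := by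
  obtain ⟨e, he⟩ := e
  show (⟨v, hv⟩ : {v // v ∉ S}) ∈ (G.inc e).pmap (fun v hv => ⟨v, hv⟩) he ↔ _
  rw [Sym2.mem_pmap_iff]
  constructor
  · rintro ⟨a, ha, h⟩
    cases Subtype.ext_iff.mp h
    exact ha
  · intro h
    exact ⟨v, h, rfl⟩


open Mgraph

abbrev Vk (k : ℕ) : Type := Fin 3 ⊕ (Fin k × Fin 3)
abbrev Ek (k : ℕ) : Type := (Fin 3 × Fin 3) ⊕ (Fin k × Fin 3 × Fin 2)

def inck (k : ℕ) : Ek k → Sym2 (Vk k)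
  | .inl (i, _) => s(.inl (i+1), .inl (i+2))
  | .inr (j, i, _) => s(.inr (j, i+1), .inr (j, i+2))

abbrev Gk (k : ℕ) : Mgraph := { V := Vk k, E := Ek k, inc := inck k }

variable {k : ℕ}

lemma mem_inl {x : Vk k} {i : Fin 3} {m : Fin 3} :
    x ∈ (Gk k).inc (.inl (i, m)) ↔ ∃ c, c ≠ i ∧ x = .inl c := by
  have h3 : ∀ c i : Fin 3, c ≠ i ↔ (c = i + 1 ∨ c = i + 2) := by decide
  show x ∈ inck k (.inl (i, m)) ↔ _
  simp only [inck, Sym2.mem_iff]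
  constructor
  · rintro (rfl | rfl)
    · exact ⟨i + 1, (h3 _ _).mpr (Or.inl rfl), rfl⟩
    · exact ⟨i + 2, (h3 _ _).mpr (Or.inr rfl), rfl⟩
  · rintro ⟨c, hc, rfl⟩
    rcases (h3 c i).mp hc with rfl | rfl <;> simp

lemma mem_inr {x : Vk k} {j : Fin k} {i : Fin 3} {m : Fin 2} :
    x ∈ (Gk k).inc (.inr (j, i, m)) ↔ ∃ c, c ≠ i ∧ x = .inr (j, c) := by
  have h3 : ∀ c i : Fin 3, c ≠ i ↔ (c = i + 1 ∨ c = i + 2) := by decide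
  show x ∈ inck k (.inr (j, i, m)) ↔ _
  simp only [inck, Sym2.mem_iff]
  constructor
  · rintro (rfl | rfl)
    · exact ⟨i + 1, (h3 _ _).mpr (Or.inl rfl), rfl⟩
    · exact ⟨i + 2, (h3 _ _).mpr (Or.inr rfl), rfl⟩
  · rintro ⟨c, hc, rfl⟩
    rcases (h3 c i).mp hc with rfl | rfl <;> simp

lemma loopless_Gk : (Gk k).Loopless := by
  have h1 : ∀ i : Fin 3, i + 1 ≠ i + 2 := by decide
  rintro (⟨i, m⟩ | ⟨j, i, m⟩) h <;>
    · simp only [Gk, inck, Sym2.mk_isDiag_iff, Sum.inl.injEq, Sum.inr.injEq,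
        Prod.mk.injEq, true_and] at h
      exact h1 i h

-- membership helpers in convenient direction
lemma inl_mem_inl {v i : Fin 3} (h : i ≠ v) {m : Fin 3} :
    (Sum.inl v : Vk k) ∈ (Gk k).inc (.inl (i, m)) :=
  mem_inl.mpr ⟨v, fun hvi => h hvi.symm, rfl⟩

lemma inr_mem_inr {j : Fin k} {v i : Fin 3} (h : i ≠ v) {m : Fin 2} :
    (Sum.inr (j, v) : Vk k) ∈ (Gk k).inc (.inr (j, i, m)) :=
  mem_inr.mpr ⟨v, fun hvi => h hvi.symm, rfl⟩

lemma not_inl_mem_inr {v : Fin 3} {b : Fin k × Fin 3 × Fin 2} :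
    (Sum.inl v : Vk k) ∉ (Gk k).inc (.inr b) := by
  obtain ⟨j, i, m⟩ := b
  intro h
  obtain ⟨c, -, hc⟩ := mem_inr.mp h
  exact Sum.inl_ne_inr hc

lemma not_inr_mem_inl {p : Fin k × Fin 3} {a : Fin 3 × Fin 3} :
    (Sum.inr p : Vk k) ∉ (Gk k).inc (.inl a) := by
  obtain ⟨i, m⟩ := a
  intro h
  obtain ⟨c, -, hc⟩ := mem_inl.mp h
  exact Sum.inr_ne_inl hc

lemma inl_ne_of_mem {v i : Fin 3} {m : Fin 3}
    (h : (Sum.inl v : Vk k) ∈ (Gk k).inc (.inl (i, m))) : i ≠ v := by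
  obtain ⟨c, hc, he⟩ := mem_inl.mp h
  cases Sum.inl.inj he
  exact fun hiv => hc hiv.symm

lemma inr_ne_of_mem {j j' : Fin k} {v i : Fin 3} {m : Fin 2}
    (h : (Sum.inr (j', v) : Vk k) ∈ (Gk k).inc (.inr (j, i, m))) : j = j' ∧ i ≠ v := by
  obtain ⟨c, hc, he⟩ := mem_inr.mp h
  obtain ⟨h1, h2⟩ := Prod.mk.injEq .. ▸ Sum.inr.inj he
  exact ⟨h1.symm, by subst h2; exact fun hiv => hc hiv.symm⟩

lemma nat_card_le {α β : Type} [Finite β] (f : α → β) (h : Function.Injective f)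
    : Nat.card α ≤ Nat.card β :=
  Nat.card_le_card_of_injective f h

lemma degree_inl (v : Fin 3) : (Gk k).degree (Sum.inl v) = 6 := by
  have hcard : Nat.card ({i : Fin 3 // i ≠ v} × Fin 3) = 6 := by
    rw [Nat.card_eq_fintype_card]
    revert v; decide
  rw [Mgraph.degree, ← hcard]
  apply le_antisymm
  · apply nat_card_le (fun e => match e with
      | ⟨.inl (i, m), h⟩ => (⟨i, inl_ne_of_mem h⟩, m)
      | ⟨.inr b, h⟩ => absurd h not_inl_mem_inr)
    rintro ⟨(⟨i, m⟩ | b), h⟩ ⟨(⟨i', m'⟩ | b'), h'⟩ hEq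
    · simp only [Prod.mk.injEq, Subtype.mk.injEq] at hEq
      simp [hEq.1, hEq.2]
    · exact absurd h' not_inl_mem_inr
    · exact absurd h not_inl_mem_inr
    · exact absurd h not_inl_mem_inr
  · apply nat_card_le (fun p => (⟨.inl (p.1.1, p.2), inl_mem_inl p.1.2⟩ :
      {e : (Gk k).E // (Sum.inl v : Vk k) ∈ (Gk k).inc e}))
    rintro ⟨⟨i, hi⟩, m⟩ ⟨⟨i', hi'⟩, m'⟩ hEq
    simp only [Subtype.mk.injEq, Sum.inl.injEq, Prod.mk.injEq] at hEq
    simp [hEq.1, hEq.2]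

lemma degree_inr (j : Fin k) (w : Fin 3) : (Gk k).degree (Sum.inr (j, w)) ≤ 4 := by
  have hcard : Nat.card ({i : Fin 3 // i ≠ w} × Fin 2) = 4 := by
    rw [Nat.card_eq_fintype_card]
    revert w; decide
  rw [Mgraph.degree, ← hcard]
  apply nat_card_le (fun e => match e with
    | ⟨.inl a, h⟩ => absurd h not_inr_mem_inl
    | ⟨.inr (j', i, m), h⟩ => (⟨i, (inr_ne_of_mem h).2⟩, m))
  rintro ⟨(a | ⟨j1, i, m⟩), h⟩ ⟨(a' | ⟨j1', i', m'⟩), h'⟩ hEq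
  · exact absurd h not_inr_mem_inl
  · exact absurd h not_inr_mem_inl
  · exact absurd h' not_inr_mem_inl
  · simp only [Prod.mk.injEq, Subtype.mk.injEq] at hEq
    have e1 := (inr_ne_of_mem h).1
    have e2 := (inr_ne_of_mem h').1
    simp [hEq.1, hEq.2, e1, e2]

lemma maxDegree_Gk : (Gk k).maxDegree = 6 := by
  apply le_antisymm
  · apply maxDegree_le
    rintro (v | ⟨j, w⟩)
    · exact le_of_eq (degree_inl v)
    · exact le_trans (degree_inr j w) (by norm_num)
  · have := le_maxDegree (G := Gk k) (Sum.inl 0)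
    rwa [degree_inl] at this

lemma degree_deleteVerts_le {G : Mgraph} {S : Set G.V} (v : G.V) (hv : v ∉ S) :
    (G.deleteVerts S).degree ⟨v, hv⟩ ≤ G.degree v := by
  apply nat_card_le (fun e => (⟨e.1.1, (mem_inc_deleteVerts e.1 v hv).mp e.2⟩ :
    {e' : G.E // v ∈ G.inc e'}))
  rintro ⟨⟨e1, he1⟩, hm1⟩ ⟨⟨e2, he2⟩, hm2⟩ hEq
  have h2 : e1 = e2 := congrArg Subtype.val hEq
  exact Subtype.ext (Subtype.ext h2)

lemma third_vertex : ∀ i i' : Fin 3, ∃ c : Fin 3, c ≠ i ∧ c ≠ i' := by decide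

lemma nine_le {S : Set (Gk k).V} (h : ∀ a : Fin 3, Sum.inl a ∉ S) :
    9 ≤ ((Gk k).deleteVerts S).chromaticIndex := by
  have hsurv : ∀ (i m : Fin 3) (x : (Gk k).V), x ∈ (Gk k).inc (.inl (i, m)) → x ∉ S := by
    intro i m x hx
    obtain ⟨c, -, rfl⟩ := mem_inl.mp hx
    exact h c
  have := le_chromaticIndex (G := (Gk k).deleteVerts S)
    (fun p : Fin 3 × Fin 3 => ⟨.inl (p.1, p.2), hsurv p.1 p.2⟩)
    (by rintro ⟨i, m⟩ ⟨i', m'⟩ hEq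
        have h2 := Sum.inl.inj (Subtype.ext_iff.mp hEq)
        obtain ⟨rfl, rfl⟩ : i = i' ∧ m = m' := by simpa using h2
        rfl)
    (by rintro ⟨i, m⟩ ⟨i', m'⟩
        obtain ⟨c, hc1, hc2⟩ := third_vertex i i'
        refine ⟨⟨Sum.inl c, h c⟩, ?_, ?_⟩ <;> refine (mem_inc_deleteVerts _ _ _).mpr ?_
        · exact inl_mem_inl hc1.symm
        · exact inl_mem_inl hc2.symm)
  simpa using this

lemma six_le {S : Set (Gk k).V} (j : Fin k) (h : ∀ w : Fin 3, Sum.inr (j, w) ∉ S) :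
    6 ≤ ((Gk k).deleteVerts S).chromaticIndex := by
  have hsurv : ∀ (i : Fin 3) (m : Fin 2) (x : (Gk k).V),
      x ∈ (Gk k).inc (.inr (j, i, m)) → x ∉ S := by
    intro i m x hx
    obtain ⟨c, -, rfl⟩ := mem_inr.mp hx
    exact h c
  have := le_chromaticIndex (G := (Gk k).deleteVerts S)
    (fun p : Fin 3 × Fin 2 => ⟨.inr (j, p.1, p.2), hsurv p.1 p.2⟩)
    (by rintro ⟨i, m⟩ ⟨i', m'⟩ hEq
        have h2 := Sum.inr.inj (Subtype.ext_iff.mp hEq)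
        obtain ⟨rfl, rfl⟩ : i = i' ∧ m = m' := by simpa using h2
        rfl)
    (by rintro ⟨i, m⟩ ⟨i', m'⟩
        obtain ⟨c, hc1, hc2⟩ := third_vertex i i'
        refine ⟨⟨Sum.inr (j, c), h c⟩, ?_, ?_⟩ <;> refine (mem_inc_deleteVerts _ _ _).mpr ?_
        · exact inr_mem_inr hc1.symm
        · exact inr_mem_inr hc2.symm)
  simpa using this

lemma chromaticIndex_nonempty_contra {S : Set (Gk k).V}
    (h : ∀ a : Fin 3, Sum.inl a ∉ S)
    (hle : ((Gk k).deleteVerts S).chromaticIndex ≤ 6) : False := by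
  have := nine_le h
  omega

/-! ### rv' upper bound : delete vertex `inl 0` -/

def colork1 (k : ℕ) : Ek k → Fin 6
  | .inl (_, m) => ⟨m.val, by have := m.isLt; omega⟩
  | .inr (_, i, m) => ⟨i.val + 3 * m.val, by have := i.isLt; have := m.isLt; omega⟩

lemma colorable_H1 : ((Gk k).deleteVerts {Sum.inl 0}).EdgeColorable 6 := by
  have hsurv : ∀ (i m : Fin 3),
      (∀ x : (Gk k).V, x ∈ (Gk k).inc (.inl (i, m)) → x ∉ ({Sum.inl 0} : Set (Gk k).V)) →
      i = 0 := by
    intro i m hs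
    by_contra hi
    exact hs (Sum.inl 0) (inl_mem_inl hi) rfl
  refine ⟨fun e => colork1 k e.1, ?_⟩
  rintro ⟨e1, he1⟩ ⟨f1, hf1⟩ hne ⟨⟨x, hx⟩, hxe, hxf⟩ hc
  replace hxe := (mem_inc_deleteVerts _ _ _).mp hxe
  replace hxf := (mem_inc_deleteVerts _ _ _).mp hxf
  apply hne
  apply Subtype.ext
  match e1, f1, he1, hf1, hxe, hxf, hc with
  | .inl (i, m), .inl (i', m'), he1, hf1, hxe, hxf, hc =>
    obtain rfl := hsurv i m he1
    obtain rfl := hsurv i' m' hf1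
    simp only [colork1, Fin.mk.injEq] at hc
    simp only [Sum.inl.injEq, Prod.mk.injEq, true_and]
    exact Fin.ext hc
  | .inl (i, m), .inr b, he1, hf1, hxe, hxf, hc =>
    obtain ⟨c, -, rfl⟩ := mem_inl.mp hxe
    exact absurd hxf not_inl_mem_inr
  | .inr b, .inl (i, m), he1, hf1, hxe, hxf, hc =>
    obtain ⟨c, -, rfl⟩ := mem_inl.mp hxf
    exact absurd hxe not_inl_mem_inr
  | .inr (j, i, m), .inr (j', i', m'), he1, hf1, hxe, hxf, hc =>
    obtain ⟨c, -, rfl⟩ := mem_inr.mp hxe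
    obtain ⟨rfl, -⟩ := inr_ne_of_mem hxf
    simp only [colork1, Fin.mk.injEq] at hc
    have h1 : i = i' := by have := i.isLt; have := i'.isLt; have := m.isLt; have := m'.isLt
                           apply Fin.ext; omega
    have h2 : m = m' := by have := i.isLt; have := i'.isLt; have := m.isLt; have := m'.isLt
                           apply Fin.ext; omega
    simp [h1, h2]

lemma card_singleton_vertex : Nat.card ↥({Sum.inl 0} : Set (Gk k).V) = 1 := by
  simp

lemma rv'_Gk : (Gk k).rv' = 1 := by
  have h1 : 1 ∈ {n : ℕ | ∃ S : Set (Gk k).V, Nat.card S = n ∧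
      ((Gk k).deleteVerts S).chromaticIndex ≤ (Gk k).maxDegree} := by
    refine ⟨{Sum.inl 0}, card_singleton_vertex, ?_⟩
    rw [maxDegree_Gk]
    exact chromaticIndex_le colorable_H1
  have h0 : 0 ∉ {n : ℕ | ∃ S : Set (Gk k).V, Nat.card S = n ∧
      ((Gk k).deleteVerts S).chromaticIndex ≤ (Gk k).maxDegree} := by
    rintro ⟨S, hS, hchrom⟩
    rw [maxDegree_Gk] at hchrom
    have hemp : IsEmpty ↥S := by
      rcases Nat.card_eq_zero.mp hS with h | h
      · exact h
      · exact absurd h (not_infinite_iff_finite.mpr (Set.toFinite S))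
    exact chromaticIndex_nonempty_contra (fun a ha => hemp.elim ⟨_, ha⟩) hchrom
  have hle : (Gk k).rv' ≤ 1 := Nat.sInf_le h1
  have hne : (Gk k).rv' ≠ 0 := by
    intro h
    exact h0 (h ▸ Nat.sInf_mem ⟨1, h1⟩)
  omega

/-! ### degree bounds in vertex-deleted graphs -/

lemma surv_inl_eq {S : Set (Gk k).V} {a : Fin 3} (ha : Sum.inl a ∈ S) {i m : Fin 3}
    (hs : ∀ x ∈ (Gk k).inc (.inl (i, m)), x ∉ S) : i = a := by
  by_contra hi
  exact hs (Sum.inl a) (inl_mem_inl hi) ha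

lemma surv_inr_eq {S : Set (Gk k).V} {j : Fin k} {b : Fin 3} (hb : Sum.inr (j, b) ∈ S)
    {i : Fin 3} {m : Fin 2}
    (hs : ∀ x ∈ (Gk k).inc (.inr (j, i, m)), x ∉ S) : i = b := by
  by_contra hi
  exact hs (Sum.inr (j, b)) (inr_mem_inr hi) hb

lemma degree_inl_deleted_le {S : Set (Gk k).V} {a : Fin 3} (ha : Sum.inl a ∈ S)
    (v : Fin 3) (hv : Sum.inl v ∉ S) :
    ((Gk k).deleteVerts S).degree ⟨Sum.inl v, hv⟩ ≤ 3 := by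
  have h3 : Nat.card (Fin 3) = 3 := by simp
  unfold Mgraph.degree
  refine le_trans ?_ (le_of_eq h3)
  apply nat_card_le (fun e => match e with
    | ⟨⟨.inl (i, m), hs⟩, hm⟩ => m
    | ⟨⟨.inr b, hs⟩, hm⟩ => absurd ((mem_inc_deleteVerts _ _ _).mp hm) not_inl_mem_inr)
  rintro ⟨⟨(⟨i, m⟩ | b), hs⟩, hm⟩ ⟨⟨(⟨i', m'⟩ | b'), hs'⟩, hm'⟩ hEq
  · have e1 := surv_inl_eq ha hs
    have e2 := surv_inl_eq ha hs'
    subst e1; subst e2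
    have h2 : m = m' := hEq
    subst h2
    rfl
  · exact absurd ((mem_inc_deleteVerts _ _ _).mp hm') not_inl_mem_inr
  · exact absurd ((mem_inc_deleteVerts _ _ _).mp hm) not_inl_mem_inr
  · exact absurd ((mem_inc_deleteVerts _ _ _).mp hm) not_inl_mem_inr

lemma degree_inr_deleted_le {S : Set (Gk k).V} {j : Fin k} {b : Fin 3}
    (hb : Sum.inr (j, b) ∈ S) (w : Fin 3) (hv : Sum.inr (j, w) ∉ S) :
    ((Gk k).deleteVerts S).degree ⟨Sum.inr (j, w), hv⟩ ≤ 2 := by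
  have h2c : Nat.card (Fin 2) = 2 := by simp
  unfold Mgraph.degree
  refine le_trans ?_ (le_of_eq h2c)
  apply nat_card_le (fun e => match e with
    | ⟨⟨.inl a, hs⟩, hm⟩ => absurd ((mem_inc_deleteVerts _ _ _).mp hm) not_inr_mem_inl
    | ⟨⟨.inr (j1, i, m), hs⟩, hm⟩ => m)
  rintro ⟨⟨(a | ⟨j1, i, m⟩), hs⟩, hm⟩ ⟨⟨(a' | ⟨j1', i', m'⟩), hs'⟩, hm'⟩ hEq
  · exact absurd ((mem_inc_deleteVerts _ _ _).mp hm) not_inr_mem_inl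
  · exact absurd ((mem_inc_deleteVerts _ _ _).mp hm) not_inr_mem_inl
  · exact absurd ((mem_inc_deleteVerts _ _ _).mp hm') not_inr_mem_inl
  · have hj1 : j1 = j := (inr_ne_of_mem ((mem_inc_deleteVerts _ _ _).mp hm)).1
    have hj1' : j1' = j := (inr_ne_of_mem ((mem_inc_deleteVerts _ _ _).mp hm')).1
    obtain rfl := hj1
    obtain rfl := hj1'
    have e1 := surv_inr_eq hb hs
    have e2 := surv_inr_eq hb hs'
    subst e1; subst e2
    have hmm : m = m' := hEq
    subst hmm
    rfl

/-! ### the vertex set `S2` : one vertex of the big triangle and one of each small one -/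

def gk (k : ℕ) : Option (Fin k) → (Gk k).V :=
  fun o => o.elim (Sum.inl 0) (fun j => Sum.inr (j, 0))

lemma gk_inj : Function.Injective (gk k) := by
  rintro (_ | j) (_ | j') h <;> simp [gk] at h <;> try rfl
  · simp [h]

def S2 (k : ℕ) : Set (Gk k).V := Set.range (gk k)

lemma card_S2 : Nat.card ↥(S2 k) = k + 1 := by
  rw [S2, Nat.card_range_of_injective gk_inj, Nat.card_eq_fintype_card]
  simp

lemma inl0_mem_S2 : (Sum.inl 0 : (Gk k).V) ∈ S2 k := ⟨none, rfl⟩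
lemma inr0_mem_S2 (j : Fin k) : (Sum.inr (j, 0) : (Gk k).V) ∈ S2 k := ⟨some j, rfl⟩

lemma inl_notmem_S2 {v : Fin 3} (h : v ≠ 0) : (Sum.inl v : (Gk k).V) ∉ S2 k := by
  rintro ⟨(_ | j), hg⟩
  · exact h (by simpa [gk] using hg.symm)
  · simp [gk] at hg

lemma inr_notmem_S2 {j : Fin k} {w : Fin 3} (h : w ≠ 0) :
    (Sum.inr (j, w) : (Gk k).V) ∉ S2 k := by
  rintro ⟨(_ | j'), hg⟩
  · simp [gk] at hg
  · simp only [gk, Option.elim, Sum.inr.injEq, Prod.mk.injEq] at hg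
    exact h hg.2.symm

/-! ### the graph `H2 = Gk - S2` is class one -/

def colork2 (k : ℕ) : Ek k → Fin 3
  | .inl (_, m) => m
  | .inr (_, _, m) => ⟨m.val, by have := m.isLt; omega⟩

lemma chrom_H2 : ((Gk k).deleteVerts (S2 k)).chromaticIndex = 3 := by
  apply le_antisymm
  · apply chromaticIndex_le
    refine ⟨fun e => colork2 k e.1, ?_⟩
    rintro ⟨e1, he1⟩ ⟨f1, hf1⟩ hne ⟨⟨x, hx⟩, hxe, hxf⟩ hc
    replace hxe := (mem_inc_deleteVerts _ _ _).mp hxe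
    replace hxf := (mem_inc_deleteVerts _ _ _).mp hxf
    apply hne
    apply Subtype.ext
    match e1, f1, he1, hf1, hxe, hxf, hc with
    | .inl (i, m), .inl (i', m'), he1, hf1, hxe, hxf, hc =>
      obtain rfl := surv_inl_eq inl0_mem_S2 he1
      obtain rfl := surv_inl_eq inl0_mem_S2 hf1
      have hmm : m = m' := hc
      simp [hmm]
    | .inl (i, m), .inr b, he1, hf1, hxe, hxf, hc =>
      obtain ⟨c, -, rfl⟩ := mem_inl.mp hxe
      exact absurd hxf not_inl_mem_inr
    | .inr b, .inl (i, m), he1, hf1, hxe, hxf, hc =>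
      obtain ⟨c, -, rfl⟩ := mem_inl.mp hxf
      exact absurd hxe not_inl_mem_inr
    | .inr (j, i, m), .inr (j', i', m'), he1, hf1, hxe, hxf, hc =>
      obtain ⟨c, -, rfl⟩ := mem_inr.mp hxe
      have hjj := (inr_ne_of_mem hxf).1
      obtain rfl := surv_inr_eq (inr0_mem_S2 j) he1
      obtain rfl := surv_inr_eq (inr0_mem_S2 j') hf1
      simp only [colork2, Fin.mk.injEq] at hc
      have hmm : m = m' := Fin.ext hc
      simp [hmm, hjj]
  · have hsurv : ∀ m : Fin 3, ∀ x ∈ (Gk k).inc (.inl (0, m)), x ∉ S2 k := by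
      intro m x hx
      obtain ⟨c, hc, rfl⟩ := mem_inl.mp hx
      exact inl_notmem_S2 hc
    have := le_chromaticIndex (G := (Gk k).deleteVerts (S2 k))
      (fun m : Fin 3 => ⟨.inl (0, m), hsurv m⟩)
      (by intro m m' hEq
          have h2 := Sum.inl.inj (Subtype.ext_iff.mp hEq)
          simpa using h2)
      (by intro m m'
          refine ⟨⟨Sum.inl 1, inl_notmem_S2 (by decide)⟩, ?_, ?_⟩ <;>
            refine (mem_inc_deleteVerts _ _ _).mpr ?_ <;> exact inl_mem_inl (by decide))
    simpa using this

lemma maxdeg_H2 : ((Gk k).deleteVerts (S2 k)).maxDegree = 3 := by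
  apply le_antisymm
  · apply maxDegree_le
    rintro ⟨(v | ⟨j, w⟩), hv⟩
    · exact degree_inl_deleted_le inl0_mem_S2 v hv
    · exact le_trans (degree_inr_deleted_le (inr0_mem_S2 j) w hv) (by norm_num)
  · have hv1 : (Sum.inl 1 : (Gk k).V) ∉ S2 k := inl_notmem_S2 (by decide)
    have hsurv : ∀ m : Fin 3, ∀ x ∈ (Gk k).inc (.inl (0, m)), x ∉ S2 k := by
      intro m x hx
      obtain ⟨c, hc, rfl⟩ := mem_inl.mp hx
      exact inl_notmem_S2 hc
    have hge : 3 ≤ ((Gk k).deleteVerts (S2 k)).degree ⟨Sum.inl 1, hv1⟩ := by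
      have h3 : Nat.card (Fin 3) = 3 := by simp
      unfold Mgraph.degree
      refine le_trans (le_of_eq h3.symm) ?_
      apply nat_card_le (fun m : Fin 3 =>
        ⟨⟨.inl (0, m), hsurv m⟩, (mem_inc_deleteVerts _ _ _).mpr (inl_mem_inl (by decide))⟩)
      intro m m' hEq
      have h2 := Sum.inl.inj (Subtype.ext_iff.mp (Subtype.ext_iff.mp hEq))
      simpa using h2
    exact le_trans hge (le_maxDegree _)

lemma classone_H2 : ((Gk k).deleteVerts (S2 k)).ClassOne :=
  chrom_H2.trans maxdeg_H2.symm

/-! ### the value of rv -/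

lemma rv_lower {n : ℕ} (S : Set (Gk k).V) (hcard : Nat.card S = n)
    (hclass : ((Gk k).deleteVerts S).ClassOne) : k + 1 ≤ n := by
  have hclass' : ((Gk k).deleteVerts S).chromaticIndex =
      ((Gk k).deleteVerts S).maxDegree := hclass
  by_cases hB : ∃ a : Fin 3, Sum.inl a ∈ S
  · obtain ⟨a, ha⟩ := hB
    have hT : ∀ j : Fin k, ∃ w : Fin 3, Sum.inr (j, w) ∈ S := by
      intro j
      by_contra hc
      push_neg at hc
      have h6 := six_le j hc
      have hD : ((Gk k).deleteVerts S).maxDegree ≤ 5 := by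
        apply maxDegree_le
        rintro ⟨(v | ⟨j', w'⟩), hv⟩
        · exact le_trans (degree_inl_deleted_le ha v hv) (by norm_num)
        · exact le_trans (degree_deleteVerts_le _ _)
            (le_trans (degree_inr j' w') (by norm_num))
      omega
    choose wf hw using hT
    have hFinj : Function.Injective
        (fun o : Option (Fin k) => (Option.elim o ⟨Sum.inl a, ha⟩
          (fun j => ⟨Sum.inr (j, wf j), hw j⟩) : ↥S)) := by
      rintro (_ | j) (_ | j') h <;>
        simp only [Option.elim, Subtype.mk.injEq] at h <;> try rfl
      · exact absurd h (by simp)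
      · exact absurd h (by simp)
      · simp only [Sum.inr.injEq, Prod.mk.injEq] at h
        simp [h.1]
    have hle := nat_card_le _ hFinj
    rw [hcard] at hle
    simpa [Nat.card_eq_fintype_card] using hle
  · push_neg at hB
    have h9 := nine_le hB
    have hD : ((Gk k).deleteVerts S).maxDegree ≤ 6 := by
      apply maxDegree_le
      rintro ⟨(v | ⟨j, w⟩), hv⟩
      · exact le_trans (degree_deleteVerts_le _ _) (le_of_eq (degree_inl v))
      · exact le_trans (degree_deleteVerts_le _ _)
          (le_trans (degree_inr j w) (by norm_num))
    omega

lemma rv_Gk : (Gk k).rv = k + 1 := by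
  have hmem : k + 1 ∈ {n : ℕ | ∃ S : Set (Gk k).V, Nat.card S = n ∧
      ((Gk k).deleteVerts S).ClassOne} := ⟨S2 k, card_S2, classone_H2⟩
  refine le_antisymm (Nat.sInf_le hmem) (le_csInf ⟨_, hmem⟩ ?_)
  rintro n ⟨S, hcard, hclass⟩
  exact rv_lower S hcard hclass

end Wk


open Mgraph in
/-- For each positive integer `k` there is a finite loopless multigraph `G_k` with
`r_v(G_k) − r'_v(G_k) = k`. -/
theorem exists_rv_sub_rv'_eq (k : ℕ) (hk : 1 ≤ k) :
    ∃ G : Mgraph, G.Loopless ∧ (G.rv : ℤ) - (G.rv' : ℤ) = (k : ℤ) := by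
  refine ⟨Wk.Gk k, Wk.loopless_Gk, ?_⟩
  rw [Wk.rv_Gk, Wk.rv'_Gk]
  push_cast
  ring
end

section
/- Let G be a finite loopless multigraph, let Δ = Δ(G), and let v be a vertex of G. Denote by r_e^Δ(H) the minimum number of edges that must be removed from a subgraph H of G to obtain a Δ-edge-colorable graph. Then r_e^Δ(G) ≤ r_e^Δ(G − v) + ⌊d_G(v)/2⌋ ≤ r_e^Δ(G − v) + ⌊Δ/2⌋. -/
namespace MgraphAux

open Mgraph Finset

attribute [local instance] Classical.propDecidable

noncomputable instance (G : Mgraph) : Fintype G.E := Fintype.ofFinite _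
noncomputable instance (G : Mgraph) : Fintype G.V := Fintype.ofFinite _

variable {G : Mgraph} {D : ℕ}

def hasCol (G : Mgraph) {D : ℕ} (c : G.E → Option (Fin D)) (w : G.V) (x : Fin D) : Prop :=
  ∃ e, w ∈ G.inc e ∧ c e = some x

def PC (G : Mgraph) {D : ℕ} (c : G.E → Option (Fin D)) : Prop :=
  ∀ e f, e ≠ f → (∃ w, w ∈ G.inc e ∧ w ∈ G.inc f) → c e = c f → c e = none

def Valid (G : Mgraph) {D : ℕ} (R : Set G.E) (v : G.V) (c : G.E → Option (Fin D)) : Prop :=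
  (∀ e ∈ R, c e = none) ∧ ∀ e, e ∉ R → v ∉ G.inc e → c e ≠ none

lemma PC.unique {c : G.E → Option (Fin D)} (h : PC G c) {e f : G.E} {w : G.V} {x : Fin D}
    (he : w ∈ G.inc e) (hf : w ∈ G.inc f) (hce : c e = some x) (hcf : c f = some x) : e = f := by
  by_contra hne
  have h2 := h e f hne ⟨w, he, hf⟩ (hce.trans hcf.symm)
  rw [hce] at h2
  exact Option.some_ne_none x h2

lemma degree_eq_card (u : G.V) :
    G.degree u = (univ.filter (fun e => u ∈ G.inc e)).card := by
  rw [Mgraph.degree, Nat.card_eq_fintype_card, Fintype.card_subtype]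

lemma degree_le_maxDegree (G : Mgraph) (u : G.V) : G.degree u ≤ G.maxDegree :=
  le_csSup ((Set.finite_range G.degree).bddAbove) ⟨u, rfl⟩

lemma sym2_eq_of_mem {α : Type} {z : Sym2 α} {a b : α} (hab : a ≠ b) (ha : a ∈ z) (hb : b ∈ z) :
    z = s(a, b) := by
  obtain ⟨y, hy⟩ := Sym2.mem_iff_exists.mp ha
  subst hy
  rcases Sym2.mem_iff.mp hb with h | h
  · exact absurd h.symm hab
  · rw [h]

lemma card_endpoints (hL : G.Loopless) (e : G.E) :
    (univ.filter (fun w => w ∈ G.inc e)).card = 2 := by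
  obtain ⟨a, b, hab⟩ : ∃ a b, G.inc e = s(a, b) := by
    obtain ⟨y, hy⟩ := Sym2.mem_iff_exists.mp (Sym2.out_fst_mem (G.inc e))
    exact ⟨_, _, hy⟩
  have hne : a ≠ b := by
    intro h
    exact hL e (by rw [hab]; exact Sym2.mk_isDiag_iff.mpr h)
  have hset : (univ.filter (fun w => w ∈ G.inc e)) = {a, b} := by
    ext w
    simp [hab, Sym2.mem_iff]
  rw [hset, Finset.card_pair hne]

def kg (G : Mgraph) {D : ℕ} (c : G.E → Option (Fin D)) (i j : Fin D) : SimpleGraph G.E where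
  Adj e f := e ≠ f ∧ (∃ w, w ∈ G.inc e ∧ w ∈ G.inc f) ∧
    ((c e = some i ∧ c f = some j) ∨ (c e = some j ∧ c f = some i))
  symm := by
    constructor
    rintro e f ⟨h1, ⟨w, hw1, hw2⟩, h3⟩
    exact ⟨h1.symm, ⟨w, hw2, hw1⟩, by tauto⟩
  loopless := ⟨fun e h => h.1 rfl⟩

lemma walk_colored {c : G.E → Option (Fin D)} {i j : Fin D} {a b : G.E}
    (p : (kg G c i j).Walk a b) (ha : c a = some i ∨ c a = some j) :
    c b = some i ∨ c b = some j := by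
  induction p with
  | nil => exact ha
  | cons h p ih =>
    apply ih
    rcases h.2.2 with ⟨_, h2⟩ | ⟨_, h2⟩
    · exact Or.inr h2
    · exact Or.inl h2

lemma reach_colored {c : G.E → Option (Fin D)} {i j : Fin D} {a b : G.E}
    (h : (kg G c i j).Reachable a b) (ha : c a = some i ∨ c a = some j) :
    c b = some i ∨ c b = some j :=
  h.elim fun p => walk_colored p ha

noncomputable def kswap (c : G.E → Option (Fin D)) (i j : Fin D) (g : G.E) (e : G.E) :
    Option (Fin D) :=
  if (kg G c i j).Reachable g e then
    (if c e = some i then some j else if c e = some j then some i else c e)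
  else c e

lemma kswap_none {c : G.E → Option (Fin D)} {i j : Fin D} {g e : G.E} :
    kswap c i j g e = none ↔ c e = none := by
  unfold kswap
  split_ifs with h1 h2 h3 <;> simp_all

lemma kswap_eq_of_not_reach {c : G.E → Option (Fin D)} {i j : Fin D} {g e : G.E}
    (h : ¬ (kg G c i j).Reachable g e) : kswap c i j g e = c e := by
  unfold kswap
  rw [if_neg h]

lemma kswap_vals {c : G.E → Option (Fin D)} {i j : Fin D} {g : G.E}
    (hg : c g = some i ∨ c g = some j) (hij : i ≠ j) {e : G.E}
    (he : (kg G c i j).Reachable g e) :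
    (c e = some i ∧ kswap c i j g e = some j) ∨ (c e = some j ∧ kswap c i j g e = some i) := by
  rcases reach_colored he hg with h | h
  · refine Or.inl ⟨h, ?_⟩
    unfold kswap
    rw [if_pos he, if_pos h]
  · refine Or.inr ⟨h, ?_⟩
    unfold kswap
    rw [if_pos he, if_neg ?_, if_pos h]
    intro hc
    rw [h] at hc
    exact hij (Option.some_inj.mp hc).symm

lemma kswap_pc {c : G.E → Option (Fin D)} {i j : Fin D} {g : G.E}
    (hpc : PC G c) (hg : c g = some i ∨ c g = some j) (hij : i ≠ j) :
    PC G (kswap c i j g) := by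
  intro e f hne hsh heq
  by_cases re : (kg G c i j).Reachable g e <;> by_cases rf : (kg G c i j).Reachable g f
  · rcases kswap_vals hg hij re with ⟨h1, h2⟩ | ⟨h1, h2⟩ <;>
      rcases kswap_vals hg hij rf with ⟨h3, h4⟩ | ⟨h3, h4⟩
    · exact absurd (hpc e f hne hsh (h1.trans h3.symm)) (by simp [h1])
    · rw [h2, h4] at heq; exact absurd (Option.some_inj.mp heq).symm hij
    · rw [h2, h4] at heq; exact absurd (Option.some_inj.mp heq) hij
    · exact absurd (hpc e f hne hsh (h1.trans h3.symm)) (by simp [h1])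
  · exfalso
    rw [kswap_eq_of_not_reach rf] at heq
    rcases kswap_vals hg hij re with ⟨h1, h2⟩ | ⟨h1, h2⟩
    · have hcf : c f = some j := by rw [← heq, h2]
      have hadj : (kg G c i j).Adj e f := ⟨hne, hsh, Or.inl ⟨h1, hcf⟩⟩
      exact rf (re.trans hadj.reachable)
    · have hcf : c f = some i := by rw [← heq, h2]
      have hadj : (kg G c i j).Adj e f := ⟨hne, hsh, Or.inr ⟨h1, hcf⟩⟩
      exact rf (re.trans hadj.reachable)
  · exfalso
    rw [kswap_eq_of_not_reach re] at heq
    rcases kswap_vals hg hij rf with ⟨h1, h2⟩ | ⟨h1, h2⟩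
    · have hce : c e = some j := by rw [heq, h2]
      have hadj : (kg G c i j).Adj f e := ⟨hne.symm, (by obtain ⟨w, hw1, hw2⟩ := hsh; exact ⟨w, hw2, hw1⟩), Or.inl ⟨h1, hce⟩⟩
      exact re (rf.trans hadj.reachable)
    · have hce : c e = some i := by rw [heq, h2]
      have hadj : (kg G c i j).Adj f e := ⟨hne.symm, (by obtain ⟨w, hw1, hw2⟩ := hsh; exact ⟨w, hw2, hw1⟩), Or.inr ⟨h1, hce⟩⟩
      exact re (rf.trans hadj.reachable)
  · rw [kswap_eq_of_not_reach re, kswap_eq_of_not_reach rf] at heq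
    rw [kswap_eq_of_not_reach re]
    exact hpc e f hne hsh heq

lemma kswap_not_hasCol_u {c : G.E → Option (Fin D)} {i j : Fin D} {g : G.E} {u : G.V}
    (hpc : PC G c) (hui : ¬ hasCol G c u i) (hcg : c g = some j) (hgu : u ∈ G.inc g)
    (hij : i ≠ j) : ¬ hasCol G (kswap c i j g) u j := by
  rintro ⟨e, hue, hce⟩
  by_cases re : (kg G c i j).Reachable g e
  · rcases kswap_vals (Or.inr hcg) hij re with ⟨h1, h2⟩ | ⟨h1, h2⟩
    · exact hui ⟨e, hue, h1⟩
    · rw [hce] at h2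
      exact hij (Option.some_inj.mp h2).symm
  · rw [kswap_eq_of_not_reach re] at hce
    have heg : e = g := hpc.unique hue hgu hce hcg
    subst heg
    exact re (SimpleGraph.Reachable.refl _)

lemma three_ends (hL : G.Loopless) {c : G.E → Option (Fin D)} (hpc : PC G c) {i j : Fin D}
    (hij : i ≠ j) {u u' w0 : G.V} (huu' : u ≠ u') (huv : u ≠ w0) (hu'v : u' ≠ w0)
    {f g g' : G.E}
    (hfv : w0 ∈ G.inc f) (hcf : c f = some i) (hvj : ¬ hasCol G c w0 j)
    (hgu : u ∈ G.inc g) (hcg : c g = some j) (hui : ¬ hasCol G c u i)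
    (hgu' : u' ∈ G.inc g') (hcg' : c g' = some j) (hui' : ¬ hasCol G c u' i)
    (hr : (kg G c i j).Reachable f g) (hr' : (kg G c i j).Reachable f g') : False := by
  classical
  set Kg := kg G c i j with hKg
  set Cf : Finset G.E := univ.filter (fun e => Kg.Reachable f e) with hCf
  have hmemC : ∀ {e : G.E}, e ∈ Cf ↔ Kg.Reachable f e := by
    intro e; simp [hCf]
  have hfC : f ∈ Cf := hmemC.mpr (SimpleGraph.Reachable.refl f)
  have hgC : g ∈ Cf := hmemC.mpr hr
  have hg'C : g' ∈ Cf := hmemC.mpr hr'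
  have hcol : ∀ e ∈ Cf, c e = some i ∨ c e = some j := fun e he =>
    reach_colored (hmemC.mp he) (Or.inl hcf)
  set degC : G.V → ℕ := fun w => (Cf.filter (fun e => w ∈ G.inc e)).card with hdegC
  have hdeg1 : ∀ (w : G.V) (e0 : G.E), e0 ∈ Cf → w ∈ G.inc e0 →
      (∀ e ∈ Cf, w ∈ G.inc e → e = e0) → degC w = 1 := by
    intro w e0 h1 h2 h3
    have hset : Cf.filter (fun e => w ∈ G.inc e) = {e0} := by
      ext e
      simp only [Finset.mem_filter, Finset.mem_singleton]
      constructor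
      · rintro ⟨hc, hw⟩; exact h3 e hc hw
      · rintro rfl; exact ⟨h1, h2⟩
    simp [hdegC, hset]
  have hdegu : degC u = 1 := by
    refine hdeg1 u g hgC hgu ?_
    intro e he hwe
    rcases hcol e he with h | h
    · exact absurd ⟨e, hwe, h⟩ hui
    · exact hpc.unique hwe hgu h hcg
  have hdegu' : degC u' = 1 := by
    refine hdeg1 u' g' hg'C hgu' ?_
    intro e he hwe
    rcases hcol e he with h | h
    · exact absurd ⟨e, hwe, h⟩ hui'
    · exact hpc.unique hwe hgu' h hcg'
  have hdegv : degC w0 = 1 := by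
    refine hdeg1 w0 f hfC hfv ?_
    intro e he hwe
    rcases hcol e he with h | h
    · exact hpc.unique hwe hfv h hcf
    · exact absurd ⟨e, hwe, h⟩ hvj
  have hdeg2 : ∀ w, degC w ≤ 2 := by
    intro w
    have hle : (Cf.filter (fun e => w ∈ G.inc e)).card
        ≤ ({some i, some j} : Finset (Option (Fin D))).card := by
      apply Finset.card_le_card_of_injOn c
      · intro e he
        rw [Finset.mem_coe, Finset.mem_filter] at he
        rcases hcol e he.1 with h | h <;> simp [h]
      · intro e he e2 he2 hce
        simp only [Finset.coe_filter, Set.mem_setOf_eq] at he he2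
        rcases hcol e he.1 with h | h <;> rcases hcol e2 he2.1 with h2 | h2
        · exact hpc.unique he.2 he2.2 h h2
        · rw [h, h2] at hce; exact absurd (Option.some_inj.mp hce) hij
        · rw [h, h2] at hce; exact absurd (Option.some_inj.mp hce).symm hij
        · exact hpc.unique he.2 he2.2 h h2
    calc degC w ≤ ({some i, some j} : Finset (Option (Fin D))).card := hle
    _ ≤ 2 := (Finset.card_insert_le _ _).trans (by simp)
  set VCf : Finset G.V := univ.filter (fun w => ∃ e ∈ Cf, w ∈ G.inc e) with hVCf
  have hmemV : ∀ {w : G.V}, w ∈ VCf ↔ ∃ e ∈ Cf, w ∈ G.inc e := by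
    intro w; simp [hVCf]
  set T3 : Finset G.V := {u, u', w0} with hT3def
  have hT3 : T3 ⊆ VCf := by
    intro w hw
    simp only [hT3def, Finset.mem_insert, Finset.mem_singleton] at hw
    rcases hw with rfl | rfl | rfl
    exacts [hmemV.mpr ⟨g, hgC, hgu⟩, hmemV.mpr ⟨g', hg'C, hgu'⟩, hmemV.mpr ⟨f, hfC, hfv⟩]
  have hT3card : T3.card = 3 := by
    rw [hT3def, Finset.card_insert_of_notMem (by simp [huu', huv]), Finset.card_pair hu'v]
  have hhs : ∑ w, degC w = 2 * Cf.card := by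
    have h1 : ∀ w, degC w = ∑ e ∈ Cf, if w ∈ G.inc e then 1 else 0 := by
      intro w
      rw [hdegC]
      exact Finset.card_filter _ _
    calc ∑ w, degC w = ∑ w, ∑ e ∈ Cf, if w ∈ G.inc e then 1 else 0 :=
          Finset.sum_congr rfl (fun w _ => h1 w)
    _ = ∑ e ∈ Cf, ∑ w, if w ∈ G.inc e then 1 else 0 := Finset.sum_comm
    _ = ∑ e ∈ Cf, 2 := by
        refine Finset.sum_congr rfl (fun e _ => ?_)
        rw [← Finset.card_filter]
        exact card_endpoints hL e
    _ = 2 * Cf.card := by rw [Finset.sum_const, smul_eq_mul, mul_comm]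
  have hzero : ∀ w ∈ (univ : Finset G.V), w ∉ VCf → degC w = 0 := by
    intro w _ hw
    rw [hdegC]
    simp only
    rw [Finset.card_eq_zero, Finset.filter_eq_empty_iff]
    intro e he hwe
    exact hw (hmemV.mpr ⟨e, he, hwe⟩)
  have hsVC : ∑ w ∈ VCf, degC w = ∑ w, degC w :=
    Finset.sum_subset (Finset.subset_univ _) hzero
  have hsplit3 : ∑ w ∈ VCf \ T3, degC w + ∑ w ∈ T3, degC w = ∑ w ∈ VCf, degC w :=
    Finset.sum_sdiff hT3
  have hsumT3 : ∑ w ∈ T3, degC w = 3 := by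
    rw [hT3def, Finset.sum_insert (by simp [huu', huv]), Finset.sum_pair hu'v,
      hdegu, hdegu', hdegv]
    omega
  have hsd_le : ∑ w ∈ VCf \ T3, degC w ≤ 2 * (VCf \ T3).card := by
    calc ∑ w ∈ VCf \ T3, degC w ≤ ∑ _w ∈ VCf \ T3, 2 :=
          Finset.sum_le_sum (fun w _ => hdeg2 w)
    _ = 2 * (VCf \ T3).card := by rw [Finset.sum_const, smul_eq_mul, mul_comm]
  have hcards : (VCf \ T3).card + 3 = VCf.card := by
    rw [← hT3card]
    exact Finset.card_sdiff_add_card_eq_card hT3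
  -- (H2) : VCf.card ≤ Cf.card + 1
  set Ff : Finset G.V := univ.filter (fun w => w ∈ G.inc f) with hFf
  have hFfcard : Ff.card = 2 := card_endpoints hL f
  set θ : G.V → G.E := fun w =>
    if h : (Cf.filter (fun e => w ∈ G.inc e)).Nonempty then
      (Finset.exists_min_image (Cf.filter (fun e => w ∈ G.inc e)) (fun e => Kg.dist f e) h).choose
    else f
    with hθ
  have hθspec : ∀ w ∈ VCf, θ w ∈ Cf ∧ w ∈ G.inc (θ w) ∧
      ∀ e ∈ Cf, w ∈ G.inc e → Kg.dist f (θ w) ≤ Kg.dist f e := by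
    intro w hw
    obtain ⟨e, he, hwe⟩ := hmemV.mp hw
    have hne : (Cf.filter (fun e => w ∈ G.inc e)).Nonempty :=
      ⟨e, Finset.mem_filter.mpr ⟨he, hwe⟩⟩
    have hspec := (Finset.exists_min_image (Cf.filter (fun e => w ∈ G.inc e))
      (fun e => Kg.dist f e) hne).choose_spec
    rw [hθ]
    simp only [dif_pos hne]
    obtain ⟨hmem, hmin⟩ := hspec
    rw [Finset.mem_filter] at hmem
    exact ⟨hmem.1, hmem.2, fun e' he' hwe' => hmin e' (Finset.mem_filter.mpr ⟨he', hwe'⟩)⟩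
  have hθmaps : ∀ w ∈ VCf \ Ff, θ w ∈ Cf.erase f := by
    intro w hw
    rw [Finset.mem_sdiff] at hw
    obtain ⟨hC1, hinc1, _⟩ := hθspec w hw.1
    rw [Finset.mem_erase]
    refine ⟨?_, hC1⟩
    intro hfe
    apply hw.2
    rw [hFf, Finset.mem_filter]
    exact ⟨Finset.mem_univ w, hfe ▸ hinc1⟩
  have hθinj : Set.InjOn θ ↑(VCf \ Ff) := by
    intro w hw w' hw' heq
    by_contra hnew
    rw [Finset.mem_coe, Finset.mem_sdiff] at hw hw'
    obtain ⟨hC1, hinc1, hmin1⟩ := hθspec w hw.1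
    obtain ⟨hC2, hinc2, hmin2⟩ := hθspec w' hw'.1
    rw [heq] at hC1 hinc1
    -- now θ w' is the common edge; call it e
    set e := θ w' with he
    have hreach : Kg.Reachable f e := hmemC.mp hC1
    have hef : e ≠ f := by
      intro h
      apply hw'.2
      rw [hFf, Finset.mem_filter]
      exact ⟨Finset.mem_univ w', h ▸ hinc2⟩
    set k := Kg.dist f e with hk
    obtain ⟨p, hp⟩ := hreach.exists_walk_length_eq_dist
    have hk1 : 1 ≤ k := by
      rcases Nat.eq_zero_or_pos k with h0 | h
      · exfalso
        rw [← hk] at hp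
        rw [h0] at hp
        exact hef (SimpleGraph.Walk.eq_of_length_eq_zero hp).symm
      · exact h
    have hrev : p.reverse.length = k := by
      rw [SimpleGraph.Walk.length_reverse, hp, hk]
    have hnotnil : ¬ p.reverse.Nil := by
      rw [SimpleGraph.Walk.nil_iff_length_eq, hrev]
      omega
    obtain ⟨b, hadj, q, hpq⟩ := SimpleGraph.Walk.not_nil_iff.mp hnotnil
    have hqlen : q.length = k - 1 := by
      have h5 := hrev
      rw [hpq, SimpleGraph.Walk.length_cons] at h5
      omega
    have hbC : b ∈ Cf := hmemC.mpr ⟨q.reverse⟩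
    have hbdist : Kg.dist f b ≤ k - 1 := by
      have h6 := SimpleGraph.dist_le q.reverse
      rw [SimpleGraph.Walk.length_reverse, hqlen] at h6
      exact h6
    obtain ⟨x, hxe, hxb⟩ := hadj.2.1
    have hincpair : G.inc e = s(w, w') := sym2_eq_of_mem hnew hinc1 hinc2
    rw [hincpair] at hxe
    rcases Sym2.mem_iff.mp hxe with rfl | rfl
    · have h7 := hmin1 b hbC hxb
      rw [heq, ← hk] at h7
      omega
    · have h7 := hmin2 b hbC hxb
      omega
  have hV1card : (VCf \ Ff).card ≤ Cf.card - 1 := by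
    have h8 : (VCf \ Ff).card ≤ (Cf.erase f).card :=
      Finset.card_le_card_of_injOn θ hθmaps hθinj
    rw [Finset.card_erase_of_mem hfC] at h8
    exact h8
  have hCfpos : 1 ≤ Cf.card := Finset.card_pos.mpr ⟨f, hfC⟩
  have hVCcard : VCf.card ≤ Cf.card + 1 := by
    have h9 : VCf ⊆ (VCf \ Ff) ∪ Ff := by
      intro w hw
      rw [Finset.mem_union, Finset.mem_sdiff]
      by_cases hwf : w ∈ Ff
      · exact Or.inr hwf
      · exact Or.inl ⟨hw, hwf⟩
    have h10 := (Finset.card_le_card h9).trans (Finset.card_union_le _ _)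
    omega
  have hfinal1 : 2 * Cf.card ≤ 2 * (VCf \ T3).card + 3 := by
    rw [← hhs, ← hsVC, ← hsplit3, hsumT3]
    omega
  omega

lemma core (G : Mgraph) (D : ℕ) (hL : G.Loopless) (hdeg : ∀ u, G.degree u ≤ D)
    (v : G.V) (R : Set G.E) (hRv : ∀ e ∈ R, v ∉ G.inc e)
    (c₀ : G.E → Option (Fin D)) (h₀p : PC G c₀) (h₀v : Valid G R v c₀) :
    ∃ c : G.E → Option (Fin D), PC G c ∧ Valid G R v c ∧
      (univ.filter (fun e => v ∈ G.inc e ∧ c e = none)).card ≤ G.degree v / 2 := by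
  classical
  set qf : (G.E → Option (Fin D)) → ℕ :=
    fun c' => (univ.filter (fun e => v ∈ G.inc e ∧ c' e ≠ none)).card with hqf
  set N : Set ℕ := {n | ∃ c', (PC G c' ∧ Valid G R v c') ∧ qf c' = n} with hN
  have hN0 : qf c₀ ∈ N := ⟨c₀, ⟨h₀p, h₀v⟩, rfl⟩
  have hbdd : BddAbove N := by
    refine ⟨Fintype.card G.E, ?_⟩
    rintro n ⟨c', _, rfl⟩
    exact (Finset.card_filter_le _ _).trans (le_of_eq (Finset.card_univ))
  obtain ⟨c, ⟨hpc, hval⟩, hq⟩ := Nat.sSup_mem ⟨_, hN0⟩ hbdd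
  refine ⟨c, hpc, hval, ?_⟩
  by_contra hUcon
  push_neg at hUcon
  -- maximality
  have hmax : ∀ c₂ : G.E → Option (Fin D), PC G c₂ → Valid G R v c₂ → qf c₂ ≤ qf c := by
    intro c₂ h1 h2
    rw [hq]
    exact le_csSup hbdd ⟨c₂, ⟨h1, h2⟩, rfl⟩
  -- extension contradiction
  have ext_contra : ∀ c₂ : G.E → Option (Fin D), PC G c₂ → Valid G R v c₂ → qf c ≤ qf c₂ →
      ∀ (e₀ : G.E) (u : G.V) (x  : Fin D), c₂ e₀ = none → G.inc e₀ = s(v, u) → u ≠ v →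
      ¬ hasCol G c₂ u x → ¬ hasCol G c₂ v x → False := by
    intro c₂ hp₂ hv₂ hle e₀ u x hnone hinc hune hmu hmv
    have hv0 : v ∈ G.inc e₀ := by rw [hinc]; exact Sym2.mem_mk_left v u
    have he₀R : e₀ ∉ R := fun h => hRv e₀ h hv0
    set c₃ : G.E → Option (Fin D) := Function.update c₂ e₀ (some x) with hc₃
    have hupd : ∀ a : G.E, a ≠ e₀ → c₃ a = c₂ a := by
      intro a ha
      rw [hc₃, Function.update_of_ne ha]
    have hupd0 : c₃ e₀ = some x := by rw [hc₃, Function.update_self]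
    have hp₃ : PC G c₃ := by
      intro a b hab hsh heq
      obtain ⟨w, hwa, hwb⟩ := hsh
      by_cases ha : a = e₀ <;> by_cases hb : b = e₀
      · exact absurd (ha.trans hb.symm) hab
      · exfalso
        subst ha
        rw [hupd0, hupd b hb] at heq
        rcases Sym2.mem_iff.mp (hinc ▸ hwa) with rfl | rfl
        · exact hmv ⟨b, hwb, heq.symm⟩
        · exact hmu ⟨b, hwb, heq.symm⟩
      · exfalso
        subst hb
        rw [hupd0, hupd a ha] at heq
        rcases Sym2.mem_iff.mp (hinc ▸ hwb) with rfl | rfl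
        · exact hmv ⟨a, hwa, heq⟩
        · exact hmu ⟨a, hwa, heq⟩
      · rw [hupd a ha, hupd b hb] at heq
        rw [hupd a ha]
        exact hp₂ a b hab ⟨w, hwa, hwb⟩ heq
    have hv₃ : Valid G R v c₃ := by
      constructor
      · intro a haR
        rw [hupd a (fun h => he₀R (h ▸ haR))]
        exact hv₂.1 a haR
      · intro a haR hav
        rw [hupd a (fun h => hav (h ▸ hv0))]
        exact hv₂.2 a haR hav
    have hqc₃ : qf c₃ = qf c₂ + 1 := by
      rw [hqf]
      simp only
      have hset : (univ.filter (fun e => v ∈ G.inc e ∧ c₃ e ≠ none))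
          = insert e₀ (univ.filter (fun e => v ∈ G.inc e ∧ c₂ e ≠ none)) := by
        ext a
        simp only [Finset.mem_filter, Finset.mem_insert, Finset.mem_univ, true_and]
        by_cases ha : a = e₀
        · subst ha
          simp [hupd0, hv0]
        · simp [hupd a ha, ha]
      rw [hset, Finset.card_insert_of_notMem (by simp [hnone])]
    have := hmax c₃ hp₃ hv₃
    omega
  -- setup
  set Uf : Finset G.E := univ.filter (fun e => v ∈ G.inc e ∧ c e = none) with hUf
  set CSf : Finset G.E := univ.filter (fun e => v ∈ G.inc e ∧ c e ≠ none) with hCSf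
  have hsplitv : Uf.card + CSf.card = (univ.filter (fun e => v ∈ G.inc e)).card := by
    rw [hUf, hCSf, ← Finset.filter_filter, ← Finset.filter_filter]
    rw [Finset.card_filter_add_card_filter_not]
  have hdv : (univ.filter (fun e => v ∈ G.inc e)).card = G.degree v := (degree_eq_card v).symm
  have hUclt : G.degree v / 2 < Uf.card := hUcon
  have hqCS : qf c = CSf.card := rfl
  have hUq : CSf.card < Uf.card := by omega
  have hUne : Uf.Nonempty := Finset.card_pos.mp (by omega)
  -- injection from colors present at a vertex to colored edges at it
  have hinj : ∀ u : G.V, (univ.filter (fun x => hasCol G c u x)).card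
      ≤ (univ.filter (fun e => u ∈ G.inc e ∧ c e ≠ none)).card := by
    intro u
    set φ : Fin D → G.E := fun x => if h : hasCol G c u x then h.choose else hUne.choose with hφ
    apply Finset.card_le_card_of_injOn φ
    · intro x hx
      have hx' : hasCol G c u x := (Finset.mem_filter.mp hx).2
      rw [hφ]
      simp only [dif_pos hx']
      obtain ⟨h1, h2⟩ := hx'.choose_spec
      exact Finset.mem_filter.mpr ⟨Finset.mem_univ _, h1, by rw [h2]; simp⟩
    · intro x hx y hy hxy
      simp only [Finset.coe_filter, Set.mem_setOf_eq] at hx hy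
      have hx' := hx.2
      have hy' := hy.2
      rw [hφ] at hxy
      simp only [dif_pos hx', dif_pos hy'] at hxy
      have h1 := hx'.choose_spec.2
      have h2 := hy'.choose_spec.2
      rw [hxy] at h1
      exact Option.some_inj.mp (h1.symm.trans h2)
  -- missing color at v
  obtain ⟨j, hvj⟩ : ∃ j : Fin D, ¬ hasCol G c v j := by
    by_contra hall
    push_neg at hall
    have : (univ.filter (fun x => hasCol G c v x)) = univ := by
      ext x; simp [hall x]
    have hcard := hinj v
    rw [this, Finset.card_univ, Fintype.card_fin, ← hCSf] at hcard
    have hd := hdeg v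
    omega
  -- endpoints
  set ep : G.E → G.V := fun e => if h : v ∈ G.inc e then Sym2.Mem.other h else v with hep
  have hep_spec : ∀ e ∈ Uf, G.inc e = s(v, ep e) ∧ ep e ≠ v := by
    intro e he
    have hv' : v ∈ G.inc e := (Finset.mem_filter.mp he).2.1
    rw [hep]
    simp only [dif_pos hv']
    exact ⟨(Sym2.other_spec hv').symm, Sym2.other_ne (hL e) hv'⟩
  have hep_mem : ∀ e ∈ Uf, ep e ∈ G.inc e := by
    intro e he
    rw [(hep_spec e he).1]
    exact Sym2.mem_mk_right _ _
  have hA : ∀ e ∈ Uf, ∀ x : Fin D, ¬ hasCol G c (ep e) x → hasCol G c v x := by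
    intro e he x hmx
    by_contra hmv
    obtain ⟨hinc, hne⟩ := hep_spec e he
    exact ext_contra c hpc hval le_rfl e (ep e) x (Finset.mem_filter.mp he).2.2 hinc hne hmx hmv
  -- Kempe disjointness
  have hdisj : ∀ e ∈ Uf, ∀ e' ∈ Uf, ep e ≠ ep e' → ∀ x : Fin D,
      ¬ hasCol G c (ep e) x → ¬ hasCol G c (ep e') x → False := by
    intro e he e' he' hne i hmi hmi'
    have hvi : hasCol G c v i := hA e he i hmi
    have hij : i ≠ j := fun h => hvj (h ▸ hvi)
    obtain ⟨f, hfv, hcf⟩ := hvi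
    obtain ⟨g, hgu, hcg⟩ : hasCol G c (ep e) j := by
      by_contra h; exact hvj (hA e he j h)
    obtain ⟨g', hgu', hcg'⟩ : hasCol G c (ep e') j := by
      by_contra h; exact hvj (hA e' he' j h)
    have getReach : ∀ e₁ ∈ Uf, ∀ g₁ : G.E, ep e₁ ∈ G.inc g₁ → c g₁ = some j →
        ¬ hasCol G c (ep e₁) i → (kg G c i j).Reachable f g₁ := by
      intro e₁ he₁ g₁ hg₁ hcg₁ hm₁
      by_cases hcase : ∀ e₂, v ∈ G.inc e₂ → ¬ (kg G c i j).Reachable g₁ e₂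
      · exfalso
        set c₂ := kswap c i j g₁ with hc₂
        have hp₂ : PC G c₂ := kswap_pc hpc (Or.inr hcg₁) hij
        have hnone₂ : ∀ e₃ : G.E, (c₂ e₃ = none ↔ c e₃ = none) := fun e₃ => kswap_none
        have hv₂ : Valid G R v c₂ :=
          ⟨fun e₃ h₃ => (hnone₂ e₃).mpr (hval.1 e₃ h₃),
           fun e₃ h₃ h₄ hcb => (hval.2 e₃ h₃ h₄) ((hnone₂ e₃).mp hcb)⟩
        have hq₂ : qf c = qf c₂ := by
          rw [hqf]
          simp only
          congr 1
          apply Finset.filter_congr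
          intro e₃ _
          constructor
          · rintro ⟨h1, h2⟩
            exact ⟨h1, fun hn => h2 ((hnone₂ e₃).mp hn)⟩
          · rintro ⟨h1, h2⟩
            exact ⟨h1, fun hn => h2 ((hnone₂ e₃).mpr hn)⟩
        refine ext_contra c₂ hp₂ hv₂ (le_of_eq hq₂) e₁ (ep e₁) j
          ((hnone₂ e₁).mpr (Finset.mem_filter.mp he₁).2.2)
          (hep_spec e₁ he₁).1 (hep_spec e₁ he₁).2
          (kswap_not_hasCol_u hpc hm₁ hcg₁ hg₁ hij) ?_
        rintro ⟨e₃, h₃, h₄⟩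
        rw [hc₂, kswap_eq_of_not_reach (hcase e₃ h₃)] at h₄
        exact hvj ⟨e₃, h₃, h₄⟩
      · push_neg at hcase
        obtain ⟨e₂, hve₂, hre₂⟩ := hcase
        rcases reach_colored hre₂ (Or.inr hcg₁) with h | h
        · have heqf : e₂ = f := hpc.unique hve₂ hfv h hcf
          exact (heqf ▸ hre₂).symm
        · exact absurd ⟨e₂, hve₂, h⟩ hvj
    have hrg := getReach e he g hgu hcg hmi
    have hrg' := getReach e' he' g' hgu' hcg' hmi'
    exact three_ends hL hpc hij hne (hep_spec e he).2 (hep_spec e' he').2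
      hfv hcf hvj hgu hcg hmi hgu' hcg' hmi' hrg hrg'
  -- final counting
  set EPf : Finset G.V := Uf.image ep with hEPf
  set Mf : G.V → Finset (Fin D) := fun u => univ.filter (fun x => ¬ hasCol G c u x) with hMf
  set tf : G.V → Finset G.E := fun u => Uf.filter (fun e => u ∈ G.inc e) with htf
  have h_i : Uf.card ≤ ∑ u ∈ EPf, (tf u).card := by
    calc Uf.card ≤ (EPf.biUnion tf).card := by
          apply Finset.card_le_card
          intro e he
          exact Finset.mem_biUnion.mpr ⟨ep e, Finset.mem_image_of_mem ep he,
            Finset.mem_filter.mpr ⟨he, hep_mem e he⟩⟩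
    _ ≤ ∑ u ∈ EPf, (tf u).card := Finset.card_biUnion_le
  have h_ii : ∀ u ∈ EPf, (tf u).card ≤ (Mf u).card := by
    intro u _
    have hdegu : (univ.filter (fun e => u ∈ G.inc e)).card ≤ D := by
      rw [← degree_eq_card]
      exact hdeg u
    have h1 : (univ.filter (fun x => hasCol G c u x)).card
        ≤ (univ.filter (fun e => u ∈ G.inc e ∧ c e ≠ none)).card := hinj u
    have h2 : (univ.filter (fun e => u ∈ G.inc e ∧ c e ≠ none)).card
        + (univ.filter (fun e => u ∈ G.inc e ∧ c e = none)).card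
        = (univ.filter (fun e => u ∈ G.inc e)).card := by
      rw [← Finset.filter_filter, ← Finset.filter_filter]
      have := Finset.card_filter_add_card_filter_not
        (s := univ.filter (fun e => u ∈ G.inc e)) (p := fun e => c e ≠ none)
      simpa using this
    have h3 : (tf u).card ≤ (univ.filter (fun e => u ∈ G.inc e ∧ c e = none)).card := by
      apply Finset.card_le_card
      intro a ha
      rw [htf, Finset.mem_filter] at ha
      rw [Finset.mem_filter]
      exact ⟨Finset.mem_univ a, ha.2, (Finset.mem_filter.mp ha.1).2.2⟩
    have h4 : (univ.filter (fun x => hasCol G c u x)).card + (Mf u).card = D := by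
      rw [hMf]
      simp only
      have := Finset.card_filter_add_card_filter_not
        (s := (univ : Finset (Fin D))) (p := fun x => hasCol G c u x)
      rw [Finset.card_univ, Fintype.card_fin] at this
      exact this
    omega
  have h_iii : ∀ u ∈ EPf, ∀ u' ∈ EPf, u ≠ u' → Disjoint (Mf u) (Mf u') := by
    intro u hu u' hu' hne
    obtain ⟨e, he, rfl⟩ := Finset.mem_image.mp hu
    obtain ⟨e', he', rfl⟩ := Finset.mem_image.mp hu'
    rw [Finset.disjoint_left]
    intro x hx hx'
    rw [hMf] at hx hx'
    exact hdisj e he e' he' hne x (Finset.mem_filter.mp hx).2 (Finset.mem_filter.mp hx').2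
  have h_iv : (EPf.biUnion Mf) ⊆ univ.filter (fun x => hasCol G c v x) := by
    intro x hx
    obtain ⟨u, hu, hxu⟩ := Finset.mem_biUnion.mp hx
    obtain ⟨e, he, rfl⟩ := Finset.mem_image.mp hu
    rw [hMf] at hxu
    exact Finset.mem_filter.mpr ⟨Finset.mem_univ x, hA e he x (Finset.mem_filter.mp hxu).2⟩
  have hfinal : Uf.card ≤ CSf.card := by
    calc Uf.card ≤ ∑ u ∈ EPf, (tf u).card := h_i
    _ ≤ ∑ u ∈ EPf, (Mf u).card := Finset.sum_le_sum h_ii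
    _ = (EPf.biUnion Mf).card := (Finset.card_biUnion h_iii).symm
    _ ≤ (univ.filter (fun x => hasCol G c v x)).card := Finset.card_le_card h_iv
    _ ≤ CSf.card := hinj v
  omega

lemma univ_colorable (H : Mgraph) (D : ℕ) : (H.deleteEdges Set.univ).EdgeColorable D := by
  refine ⟨fun e => absurd (Set.mem_univ e.1) e.2, ?_⟩
  intro e
  exact absurd (Set.mem_univ e.1) e.2

end MgraphAux

open Mgraph in
/-- Let `G` be a finite loopless multigraph, `Δ = Δ(G)` and `v` a vertex of `G`. Then
`r_e^Δ(G) ≤ r_e^Δ(G − v) + ⌊d_G(v)/2⌋ ≤ r_e^Δ(G − v) + ⌊Δ/2⌋`, where `r_e^Δ(H)` is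
the minimum number of edges whose removal from `H` leaves a `Δ`-edge-colorable graph. -/
theorem resistanceTo_deleteVert (G : Mgraph) (hG : G.Loopless) (v : G.V) :
    G.resistanceTo G.maxDegree ≤
      (G.deleteVerts {v}).resistanceTo G.maxDegree + G.degree v / 2 ∧
    (G.deleteVerts {v}).resistanceTo G.maxDegree + G.degree v / 2 ≤
      (G.deleteVerts {v}).resistanceTo G.maxDegree + G.maxDegree / 2 := by
  classical
  have hDv : G.degree v ≤ G.maxDegree := MgraphAux.degree_le_maxDegree G v
  refine ⟨?_, Nat.add_le_add_left (Nat.div_le_div_right hDv) _⟩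
  have hne : {k : ℕ | ∃ S : Set (G.deleteVerts {v}).E, Nat.card S = k ∧
      ((G.deleteVerts {v}).deleteEdges S).EdgeColorable G.maxDegree}.Nonempty :=
    ⟨_, Set.univ, rfl, MgraphAux.univ_colorable _ _⟩
  have hrdef : (G.deleteVerts {v}).resistanceTo G.maxDegree
      = sInf {k : ℕ | ∃ S : Set (G.deleteVerts {v}).E, Nat.card S = k ∧
        ((G.deleteVerts {v}).deleteEdges S).EdgeColorable G.maxDegree} := rfl
  obtain ⟨S₀, hS₀, cH, hcH⟩ := Nat.sInf_mem hne
  set R : Set G.E := Subtype.val '' S₀ with hRdef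
  have hRv : ∀ e ∈ R, v ∉ G.inc e := by
    rintro e ⟨e', _, rfl⟩ hv'
    exact e'.2 v hv' (Set.mem_singleton v)
  set c₀ : G.E → Option (Fin G.maxDegree) := fun e =>
    if h : ∃ hv' : ∀ u ∈ G.inc e, u ∉ ({v} : Set G.V), (⟨e, hv'⟩ : (G.deleteVerts {v}).E) ∉ S₀
    then some (cH ⟨⟨e, h.choose⟩, h.choose_spec⟩) else none with hc₀
  have hc₀pos : ∀ (e : G.E)
      (h : ∃ hv' : ∀ u ∈ G.inc e, u ∉ ({v} : Set G.V), (⟨e, hv'⟩ : (G.deleteVerts {v}).E) ∉ S₀),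
      c₀ e = some (cH ⟨⟨e, h.choose⟩, h.choose_spec⟩) := by
    intro e h
    rw [hc₀]
    simp only [dif_pos h]
  have hc₀neg : ∀ e : G.E,
      (¬ ∃ hv' : ∀ u ∈ G.inc e, u ∉ ({v} : Set G.V), (⟨e, hv'⟩ : (G.deleteVerts {v}).E) ∉ S₀) →
      c₀ e = none := by
    intro e h
    rw [hc₀]
    simp only [dif_neg h]
  have h₀p : MgraphAux.PC G c₀ := by
    intro a b hab hsh heq
    by_cases ha : ∃ hv' : ∀ u ∈ G.inc a, u ∉ ({v} : Set G.V),
        (⟨a, hv'⟩ : (G.deleteVerts {v}).E) ∉ S₀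
    · by_cases hb : ∃ hv' : ∀ u ∈ G.inc b, u ∉ ({v} : Set G.V),
          (⟨b, hv'⟩ : (G.deleteVerts {v}).E) ∉ S₀
      · exfalso
        rw [hc₀pos a ha, hc₀pos b hb] at heq
        have hEne : (⟨⟨a, ha.choose⟩, ha.choose_spec⟩ :
            ((G.deleteVerts {v}).deleteEdges S₀).E) ≠ ⟨⟨b, hb.choose⟩, hb.choose_spec⟩ := by
          intro h
          exact hab (congrArg (fun z => z.1.1) h)
        obtain ⟨w, hwa, hwb⟩ := hsh
        have hsh' : ∃ w', w' ∈ ((G.deleteVerts {v}).deleteEdges S₀).inc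
              ⟨⟨a, ha.choose⟩, ha.choose_spec⟩
            ∧ w' ∈ ((G.deleteVerts {v}).deleteEdges S₀).inc ⟨⟨b, hb.choose⟩, hb.choose_spec⟩ := by
          refine ⟨⟨w, ha.choose w hwa⟩, ?_, ?_⟩
          · exact (Sym2.mem_pmap_iff _ _ _ _).mpr ⟨w, hwa, rfl⟩
          · exact (Sym2.mem_pmap_iff _ _ _ _).mpr ⟨w, hwb, rfl⟩
        exact hcH _ _ hEne hsh' (Option.some_inj.mp heq)
      · rw [hc₀neg b hb] at heq
        exact heq
    · exact hc₀neg a ha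
  have h₀v : MgraphAux.Valid G R v c₀ := by
    constructor
    · rintro a ⟨a', ha', rfl⟩
      apply hc₀neg
      rintro ⟨hv', hnot⟩
      have heq' : (⟨a'.1, hv'⟩ : (G.deleteVerts {v}).E) = a' := Subtype.ext rfl
      exact hnot (by rw [heq']; exact ha')
    · intro a haR hav
      have hv' : ∀ u ∈ G.inc a, u ∉ ({v} : Set G.V) := by
        intro u hu hmem
        rw [Set.mem_singleton_iff] at hmem
        subst hmem
        exact hav hu
      have hnot : (⟨a, hv'⟩ : (G.deleteVerts {v}).E) ∉ S₀ := by
        intro hmem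
        exact haR ⟨⟨a, hv'⟩, hmem, rfl⟩
      rw [hc₀pos a ⟨hv', hnot⟩]
      simp
  obtain ⟨c, hpc, hval, hTcard⟩ := MgraphAux.core G G.maxDegree hG
    (MgraphAux.degree_le_maxDegree G) v R hRv c₀ h₀p h₀v
  set T : Set G.E := {e : G.E | v ∈ G.inc e ∧ c e = none} with hTdef
  have hTn : T.ncard ≤ G.degree v / 2 := by
    rw [hTdef, Set.ncard_eq_toFinset_card', Set.toFinset_setOf]
    exact hTcard
  have hcolG : (G.deleteEdges (R ∪ T)).EdgeColorable G.maxDegree := by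
    have hsome : ∀ e : (G.deleteEdges (R ∪ T)).E, (c e.1).isSome := by
      intro e
      have hne' : e.1 ∉ R ∪ T := e.2
      rw [Option.isSome_iff_ne_none]
      by_cases hv' : v ∈ G.inc e.1
      · intro h
        exact hne' (Or.inr ⟨hv', h⟩)
      · exact hval.2 e.1 (fun hR => hne' (Or.inl hR)) hv'
    refine ⟨fun e => (c e.1).get (hsome e), ?_⟩
    intro a b hab hsh heq
    have hab' : a.1 ≠ b.1 := fun h => hab (Subtype.ext h)
    have heq' : c a.1 = c b.1 := by
      rw [← Option.some_get (hsome a), ← Option.some_get (hsome b)]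
      exact congrArg some heq
    have hnone := hpc a.1 b.1 hab' hsh heq'
    exact (Option.isSome_iff_ne_none.mp (hsome a)) hnone
  have hmem : Nat.card ↑(R ∪ T) ∈
      {k : ℕ | ∃ S : Set G.E, Nat.card S = k ∧ (G.deleteEdges S).EdgeColorable G.maxDegree} :=
    ⟨_, rfl, hcolG⟩
  have hle : G.resistanceTo G.maxDegree ≤ Nat.card ↑(R ∪ T) := Nat.sInf_le hmem
  have hRcard : R.ncard = (G.deleteVerts {v}).resistanceTo G.maxDegree := by
    rw [← Nat.card_coe_set_eq, hRdef, show Nat.card ↑(Subtype.val '' S₀) = Nat.card S₀ from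
      Nat.card_image_of_injective Subtype.val_injective S₀, hS₀]
    exact hrdef.symm
  calc G.resistanceTo G.maxDegree ≤ Nat.card ↑(R ∪ T) := hle
  _ = (R ∪ T).ncard := Nat.card_coe_set_eq _
  _ ≤ R.ncard + T.ncard := Set.ncard_union_le _ _
  _ ≤ (G.deleteVerts {v}).resistanceTo G.maxDegree + G.degree v / 2 := by
      rw [hRcard]
      exact Nat.add_le_add_left hTn _
end
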